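/- For every dimension d ≥ 1 there is a constant C = C(d) > 0 with the following property. Let ℓ₀ > 0, let k ≥ 1 be an integer, and partition the cube [0, ℓ₀]^d into the k^d closed grid cells ∏_{i=1}^d [a_i·ℓ₀/k, (a_i+1)·ℓ₀/k] for a ∈ {0,…,k−1}^d. Let D ⊆ ℝ^d be a convex set and let L ≥ 0. Then the number of grid cells that contain a point at distance at most L from the topological boundary of D is at most C·k^{d−1}·(1 + (kL/ℓ₀)^d). -/

import Mathlib

open Finset

noncomputable def clampN (k : ℕ) (h t : ℝ) : ℕ := min (k-1) (⌊t/h⌋).toNat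

lemma clampN_lt {k : ℕ} (hk : 1 ≤ k) (h t : ℝ) : clampN k h t < k := by
  unfold clampN; omega

lemma clampN_cell {k : ℕ} (hk : 1 ≤ k) {h : ℝ} (hh : 0 < h) (t : ℝ)
    (h0 : clampN k h t ≠ 0) (h1 : clampN k h t ≠ k - 1) :
    (clampN k h t : ℝ) * h ≤ t ∧ t < ((clampN k h t : ℝ) + 1) * h := by
  set F := ⌊t/h⌋ with hF
  have hc : (clampN k h t : ℤ) = F := by
    unfold clampN
    have h2 : F.toNat ≠ 0 := by
      intro hz
      unfold clampN at h0
      omega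
    have h3 : 0 < F := by omega
    have h4 : min (k-1) F.toNat = F.toNat := by
      unfold clampN at h1
      omega
    rw [h4]
    omega
  have hfl : (F : ℝ) ≤ t / h := Int.floor_le _
  have hfu : t / h < (F : ℝ) + 1 := Int.lt_floor_add_one _
  have hcr : ((clampN k h t : ℕ) : ℝ) = (F : ℝ) := by exact_mod_cast hc
  constructor
  · rw [hcr]
    calc (F:ℝ) * h ≤ (t/h) * h := by nlinarith
    _ = t := by field_simp
  · rw [hcr]
    calc t = (t/h) * h := by field_simp
    _ < ((F:ℝ) + 1) * h := by nlinarith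

lemma clampN_close {k : ℕ} (hk : 1 ≤ k) {h : ℝ} (hh : 0 < h) {a : ℕ} (ha : a < k)
    {x t L : ℝ} (hax1 : (a:ℝ) * h ≤ x) (hax2 : x ≤ ((a:ℝ)+1) * h)
    (hxt : |x - t| ≤ L) {m : ℕ} (hm : L ≤ (m:ℝ) * h) :
    |(clampN k h t : ℤ) - (a : ℤ)| ≤ (m : ℤ) + 1 := by
  set F := ⌊t/h⌋ with hF
  have ht1 : ((a:ℝ) - m) * h ≤ t := by
    have := abs_le.1 hxt
    nlinarith
  have ht2 : t ≤ ((a:ℝ) + 1 + m) * h := by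
    have := abs_le.1 hxt
    nlinarith
  have hFl : (a : ℤ) - m ≤ F := by
    have h1 : ((a:ℝ) - m) ≤ t / h := by
      rw [le_div_iff₀ hh]; exact ht1
    have h2 : t / h < (F:ℝ) + 1 := Int.lt_floor_add_one _
    have : ((a:ℝ) - m) < (F:ℝ) + 1 := lt_of_le_of_lt h1 h2
    have : ((a:ℤ) - m : ℤ) < F + 1 := by exact_mod_cast (by push_cast; linarith : (((a:ℤ) - m : ℤ) : ℝ) < ((F + 1 : ℤ) : ℝ))
    omega
  have hFu : F ≤ (a : ℤ) + 1 + m := by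
    have h1 : t / h ≤ (a:ℝ) + 1 + m := by
      rw [div_le_iff₀ hh]; linarith
    have h2 : (F:ℝ) ≤ t/h := Int.floor_le _
    have : (F : ℝ) ≤ (((a:ℤ) + 1 + m : ℤ) : ℝ) := by push_cast; linarith
    exact_mod_cast this
  have hca : (clampN k h t : ℤ) = min ((k:ℤ)-1) (max F 0) := by
    unfold clampN
    omega
  rw [abs_le]
  omega

lemma slice_card {n k : ℕ} (i : Fin (n+1)) (v : ℕ) :
    (Finset.univ.filter (fun b : Fin (n+1) → Fin k => (b i : ℕ) = v)).card ≤ k ^ n := by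
  classical
  have hinj : Set.InjOn (fun (b : Fin (n+1) → Fin k) (j : Fin n) => b (i.succAbove j))
      ((Finset.univ.filter (fun b : Fin (n+1) → Fin k => (b i : ℕ) = v)) : Set _) := by
    intro b hb b' hb' heq
    simp only [Finset.coe_filter, Set.mem_setOf_eq] at hb hb'
    funext j
    by_cases hj : j = i
    · rw [hj]
      exact Fin.val_injective (hb.2.trans hb'.2.symm)
    · obtain ⟨l, hl⟩ := Fin.exists_succAbove_eq hj
      have := congrFun heq l
      simpa [hl] using this
  have := Finset.card_le_card_of_injOn _ (fun b _ => Finset.mem_univ _) hinj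
  simpa using this

lemma box_card {d k m : ℕ} (b : Fin d → Fin k) :
    (Finset.univ.filter
      (fun a : Fin d → Fin k => ∀ i, |(a i : ℤ) - (b i : ℤ)| ≤ (m:ℤ)+1)).card
      ≤ (2*m+3) ^ d := by
  classical
  have hsub : (Finset.univ.filter
      (fun a : Fin d → Fin k => ∀ i, |(a i : ℤ) - (b i : ℤ)| ≤ (m:ℤ)+1))
      ⊆ Fintype.piFinset (fun i => Finset.univ.filter
          (fun v : Fin k => |(v : ℤ) - (b i : ℤ)| ≤ (m:ℤ)+1)) := by
    intro a ha
    rw [Finset.mem_filter] at ha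
    rw [Fintype.mem_piFinset]
    intro i
    exact Finset.mem_filter.2 ⟨Finset.mem_univ _, ha.2 i⟩
  refine le_trans (Finset.card_le_card hsub) ?_
  rw [Fintype.card_piFinset]
  have hcoord : ∀ i : Fin d, (Finset.univ.filter
      (fun v : Fin k => |(v : ℤ) - (b i : ℤ)| ≤ (m:ℤ)+1)).card ≤ 2*m+3 := by
    intro i
    have hinj : Set.InjOn (fun v : Fin k => (v : ℤ))
        ((Finset.univ.filter (fun v : Fin k => |(v : ℤ) - (b i : ℤ)| ≤ (m:ℤ)+1)) : Set _) := by
      intro v _ v' _ heq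
      have heq' : ((v:ℕ):ℤ) = ((v':ℕ):ℤ) := heq
      exact Fin.val_injective (by exact_mod_cast heq')
    have hmap : ∀ v ∈ Finset.univ.filter (fun v : Fin k => |(v : ℤ) - (b i : ℤ)| ≤ (m:ℤ)+1),
        (v : ℤ) ∈ Finset.Icc ((b i : ℤ) - ((m:ℤ)+1)) ((b i : ℤ) + ((m:ℤ)+1)) := by
      intro v hv
      rw [Finset.mem_filter] at hv
      rw [Finset.mem_Icc]
      have := abs_le.1 hv.2
      omega
    have := Finset.card_le_card_of_injOn _ hmap hinj
    refine le_trans this ?_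
    rw [Int.card_Icc]
    omega
  calc ∏ i, (Finset.univ.filter
      (fun v : Fin k => |(v : ℤ) - (b i : ℤ)| ≤ (m:ℤ)+1)).card
      ≤ ∏ _i : Fin d, (2*m+3) := Finset.prod_le_prod' (fun i _ => hcoord i)
    _ = (2*m+3)^d := by rw [Finset.prod_const, Finset.card_univ, Fintype.card_fin]

lemma one_add_pow_le {t : ℝ} (ht : 0 ≤ t) (d : ℕ) : (1+t)^d ≤ 2^d * (1 + t^d) := by
  have h2 : (0:ℝ) < 2^d := pow_pos zero_lt_two d
  have htd : 0 ≤ t^d := pow_nonneg ht d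
  rcases le_total t 1 with h | h
  · have h1 : (1+t)^d ≤ 2^d := pow_le_pow_left₀ (by linarith) (by linarith) d
    nlinarith
  · have h1 : (1+t)^d ≤ (2*t)^d := pow_le_pow_left₀ (by linarith) (by linarith) d
    rw [mul_pow] at h1
    nlinarith

lemma coord_le_dist {d : ℕ} (x y : EuclideanSpace ℝ (Fin d)) (i : Fin d) :
    |x i - y i| ≤ dist x y := by
  rw [EuclideanSpace.dist_eq]
  have h1 : |x i - y i| = Real.sqrt ((x i - y i)^2) := (Real.sqrt_sq_eq_abs _).symm
  rw [h1]
  apply Real.sqrt_le_sqrt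
  have h2 : (x i - y i)^2 = dist (x i) (y i)^2 := by rw [Real.dist_eq, sq_abs]
  rw [h2]
  exact Finset.single_le_sum (f := fun j => dist (x j) (y j)^2)
    (fun j _ => sq_nonneg _) (mem_univ i)


lemma exists_support {d : ℕ} {D : Set (EuclideanSpace ℝ (Fin d))} (hD : Convex ℝ D)
    {y : EuclideanSpace ℝ (Fin d)} (hy : y ∈ frontier D) :
    ∃ f : EuclideanSpace ℝ (Fin d) →L[ℝ] ℝ, f ≠ 0 ∧ ∀ z ∈ closure D, f z ≤ f y := by
  have hyc : y ∈ closure D := frontier_subset_closure hy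
  have hyi : y ∉ interior D := fun h => hy.2 h
  by_cases hne : (interior D).Nonempty
  · obtain ⟨f, hf⟩ := geometric_hahn_banach_open_point hD.interior isOpen_interior hyi
    obtain ⟨a, ha⟩ := hne
    refine ⟨f, ?_, ?_⟩
    · intro h0
      have := hf a ha
      rw [h0] at this
      simp at this
    · intro z hz
      -- approximate z by points of the open segment towards a
      have hseg : ∀ t ∈ Set.Ioo (0:ℝ) 1, f ((1 - t) • z + t • a) ≤ f y := by
        intro t ht
        have : (1 - t) • z + t • a ∈ openSegment ℝ z a :=
          ⟨1 - t, t, by linarith [ht.2], ht.1, by ring, rfl⟩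
        exact le_of_lt (hf _ (hD.openSegment_closure_interior_subset_interior hz ha this))
      have hcont : Continuous fun t : ℝ => f ((1 - t) • z + t • a) := by fun_prop
      have h0cl : (0:ℝ) ∈ closure (Set.Ioo (0:ℝ) 1) := by
        rw [closure_Ioo one_ne_zero.symm]; exact ⟨le_refl _, zero_le_one⟩
      haveI : (nhdsWithin (0:ℝ) (Set.Ioo (0:ℝ) 1)).NeBot :=
        mem_closure_iff_nhdsWithin_neBot.1 h0cl
      have htend : Filter.Tendsto (fun t : ℝ => f ((1 - t) • z + t • a))
          (nhdsWithin 0 (Set.Ioo (0:ℝ) 1)) (nhds (f z)) := by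
        have := (hcont.tendsto 0).mono_left
          (nhdsWithin_le_nhds (s := Set.Ioo (0:ℝ) 1))
        simpa using this
      exact le_of_tendsto htend (Filter.eventually_of_mem self_mem_nhdsWithin hseg)
  · -- interior empty: D lies in a proper affine subspace
    have hDne : D.Nonempty := by
      rcases Set.eq_empty_or_nonempty D with h | h
      · rw [h] at hyc; simp at hyc
      · exact h
    have hspan : affineSpan ℝ D ≠ ⊤ := by
      intro h
      exact hne ((hD.interior_nonempty_iff_affineSpan_eq_top).2 h)
    have hdir : (affineSpan ℝ D).direction ≠ ⊤ := by
      intro h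
      have hne' : ((affineSpan ℝ D : Set (EuclideanSpace ℝ (Fin d)))).Nonempty :=
        (affineSpan_nonempty ℝ).2 hDne
      exact hspan ((AffineSubspace.direction_eq_top_iff_of_nonempty hne').1 h)
    have horth : ((affineSpan ℝ D).direction)ᗮ ≠ ⊥ := by
      exact fun h => hdir (Submodule.orthogonal_eq_bot_iff.1 h)
    obtain ⟨ν, hνmem, hν0⟩ := Submodule.exists_mem_ne_zero_of_ne_bot horth
    refine ⟨innerSL ℝ ν, ?_, ?_⟩
    · intro h0
      have : (innerSL ℝ ν) ν = 0 := by rw [h0]; rfl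
      rw [innerSL_apply_apply, real_inner_self_eq_norm_sq] at this
      exact hν0 (by simpa using this)
    · have hclosed : IsClosed ((affineSpan ℝ D : Set (EuclideanSpace ℝ (Fin d)))) :=
        (affineSpan ℝ D).closed_of_finiteDimensional
      have hsub : closure D ⊆ (affineSpan ℝ D : Set (EuclideanSpace ℝ (Fin d))) :=
        closure_minimal (subset_affineSpan ℝ D) hclosed
      intro z hz
      have hzy : z - y ∈ (affineSpan ℝ D).direction := by
        have := AffineSubspace.vsub_mem_direction (hsub hz) (hsub hyc)
        simpa using this
      have : inner ℝ (z - y) ν = (0:ℝ) := (Submodule.mem_orthogonal _ ν).1 hνmem _ hzy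
      have h2 : inner ℝ ν (z - y) = (0:ℝ) := by rwa [real_inner_comm]
      rw [inner_sub_right] at h2
      simp only [innerSL_apply_apply]
      linarith

lemma exists_normal' {d : ℕ} {D : Set (EuclideanSpace ℝ (Fin d))} (hD : Convex ℝ D)
    {y : EuclideanSpace ℝ (Fin d)}
    (hsup : ∃ f : EuclideanSpace ℝ (Fin d) →L[ℝ] ℝ, f ≠ 0 ∧ ∀ z ∈ closure D, f z ≤ f y) :
    ∃ ν : Fin d → ℝ, (∃ j, ν j ≠ 0) ∧
      ∀ z ∈ closure D, ∑ j, ν j * (z j - y j) ≤ 0 := by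
  obtain ⟨f, hf0, hf⟩ := hsup
  have expand : ∀ w : EuclideanSpace ℝ (Fin d),
      f w = ∑ j, f (EuclideanSpace.single j (1:ℝ)) * w j := by
    intro w
    have hw : (∑ j, w j • EuclideanSpace.single j (1:ℝ)) = w := by
      have := (EuclideanSpace.basisFun (Fin d) ℝ).sum_repr w
      simpa [EuclideanSpace.basisFun_apply, EuclideanSpace.basisFun_repr] using this
    conv_lhs => rw [← hw]
    rw [map_sum]
    simp [smul_eq_mul, mul_comm]
  refine ⟨fun j => f (EuclideanSpace.single j (1:ℝ)), ?_, ?_⟩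
  · by_contra hall
    push_neg at hall
    apply hf0
    ext w
    rw [expand w]
    simp [hall]
  · intro z hz
    have h1 : ∑ j, f (EuclideanSpace.single j (1:ℝ)) * (z j - y j) = f z - f y := by
      rw [expand z, expand y, ← Finset.sum_sub_distrib]
      congr 1; ext j; ring
    rw [h1]
    linarith [hf z hz]

lemma good_cells_card {n k : ℕ} {h : ℝ} (hh : 0 < h)
    {D : Set (EuclideanSpace ℝ (Fin (n+1)))} (hD : Convex ℝ D)
    (B : Finset (Fin (n+1) → Fin k))
    (y : (Fin (n+1) → Fin k) → EuclideanSpace ℝ (Fin (n+1)))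
    (hyf : ∀ b ∈ B, y b ∈ frontier D)
    (hyc : ∀ b ∈ B, ∀ i, (b i : ℝ) * h ≤ y b i ∧ y b i ≤ ((b i : ℝ) + 1) * h) :
    B.card ≤ (2*(n+1)+1) * ((n+1) * (2 * k ^ n)) := by
  classical
  have hnorm : ∀ b ∈ B, ∃ ν : Fin (n+1) → ℝ, (∃ j, ν j ≠ 0) ∧
      ∀ z ∈ closure D, ∑ j, ν j * (z j - y b j) ≤ 0 :=
    fun b hb => exists_normal' hD (exists_support hD (hyf b hb))
  choose! ν hν1 hν2 using hnorm
  have hmax : ∀ b ∈ B, ∃ i : Fin (n+1), ∀ j, |ν b j| ≤ |ν b i| := by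
    intro b _
    obtain ⟨i, _, hi⟩ := Finset.exists_max_image (univ : Finset (Fin (n+1)))
      (fun j => |ν b j|) ⟨0, mem_univ 0⟩
    exact ⟨i, fun j => hi j (mem_univ j)⟩
  choose! im him using hmax
  have hpos : ∀ b ∈ B, 0 < |ν b (im b)| := by
    intro b hb
    obtain ⟨j, hj⟩ := hν1 b hb
    exact lt_of_lt_of_le (abs_pos.2 hj) (him b hb j)
  set Φ : (Fin (n+1) → Fin k) → Fin (n+1) × Bool × (Fin n → Fin k) :=
    fun b => (im b, decide (0 < ν b (im b)), fun j => b ((im b).succAbove j)) with hΦ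
  -- one-sided support estimate
  have main : ∀ b ∈ B, ∀ b' ∈ B, (∀ j, j ≠ im b → b j = b' j) →
      ν b (im b) * (y b' (im b) - y b (im b)) ≤ (n:ℝ) * (|ν b (im b)| * h) := by
    intro b hb b' hb' hagree
    set i := im b
    have hsum := hν2 b hb (y b') (frontier_subset_closure (hyf b' hb'))
    have heq : (∑ j : Fin (n+1), ν b j * (y b' j - y b j))
        = ν b i * (y b' i - y b i) + ∑ j ∈ univ.erase i, ν b j * (y b' j - y b j) :=
      (Finset.add_sum_erase _ _ (mem_univ i)).symm
    have hsplit : ν b i * (y b' i - y b i)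
        + ∑ j ∈ univ.erase i, ν b j * (y b' j - y b j) ≤ 0 := by
      rw [← heq]; exact hsum
    have hterm : ∀ j ∈ univ.erase i, -(|ν b i| * h) ≤ ν b j * (y b' j - y b j) := by
      intro j hj
      have hji : j ≠ i := (Finset.mem_erase.1 hj).1
      have hbj := hyc b hb j
      have hbj' := hyc b' hb' j
      rw [← hagree j hji] at hbj'
      have habs : |y b' j - y b j| ≤ h := by
        rw [abs_le]
        constructor <;> nlinarith [hbj.1, hbj.2, hbj'.1, hbj'.2]
      have : |ν b j * (y b' j - y b j)| ≤ |ν b i| * h := by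
        rw [abs_mul]
        exact mul_le_mul (him b hb j) habs (abs_nonneg _) (abs_nonneg _)
      linarith [neg_abs_le (ν b j * (y b' j - y b j)), this]
    have hsum2 : -((n:ℝ) * (|ν b i| * h)) ≤ ∑ j ∈ univ.erase i, ν b j * (y b' j - y b j) := by
      have := Finset.sum_le_sum hterm
      have hcard : (univ.erase i).card = n := by
        rw [Finset.card_erase_of_mem (mem_univ i), Finset.card_univ, Fintype.card_fin]
        omega
      rw [Finset.sum_const, hcard, nsmul_eq_mul] at this
      linarith [this]
    linarith
  -- distance of indices in a fiber
  have key : ∀ b ∈ B, ∀ b' ∈ B, Φ b = Φ b' →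
      |(b (im b) : ℤ) - ((b' (im b) : ℕ) : ℤ)| ≤ (n:ℤ) + 1 := by
    intro b hb b' hb' hΦeq
    have h1 : im b = im b' := congrArg Prod.fst hΦeq
    have h2 : decide (0 < ν b (im b)) = decide (0 < ν b' (im b')) :=
      congrArg (fun p => p.2.1) hΦeq
    have h3 : ∀ j, j ≠ im b → b j = b' j := by
      intro j hj
      obtain ⟨l, hl⟩ := Fin.exists_succAbove_eq hj
      have := congrFun (congrArg (fun p => p.2.2) hΦeq) l
      change b ((im b).succAbove l) = b' ((im b').succAbove l) at this
      rw [← hl]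
      rw [h1] at this ⊢
      exact this
    have h3' : ∀ j, j ≠ im b' → b' j = b j := by
      intro j hj; rw [← h1] at hj; exact (h3 j hj).symm
    set i := im b
    have hm1 := main b hb b' hb' h3
    have hm2 := main b' hb' b hb h3'
    rw [← h1] at hm2
    -- |y b i - y b' i| ≤ n * h
    have hyd : |y b i - y b' i| ≤ (n:ℝ) * h := by
      have hb0 : ν b i ≠ 0 := abs_pos.1 (hpos b hb)
      have hb0' : ν b' i ≠ 0 := by
        have := hpos b' hb'
        rw [← h1] at this
        exact abs_pos.1 this
      rcases lt_or_gt_of_ne hb0 with hneg | hposs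
      · -- ν b i < 0, so ν b' i < 0 too
        have hneg' : ν b' i < 0 := by
          rcases lt_or_gt_of_ne hb0' with h' | h'
          · exact h'
          · exfalso
            rw [← h1] at h2
            simp [not_lt.2 hneg.le, h'] at h2
        rw [abs_of_neg hneg] at hm1
        rw [abs_of_neg hneg'] at hm2
        rw [abs_le]
        constructor <;> nlinarith
      · have hpos' : 0 < ν b' i := by
          rcases lt_or_gt_of_ne hb0' with h' | h'
          · exfalso
            rw [← h1] at h2
            simp [hposs, not_lt.2 h'.le] at h2
          · exact h'
        rw [abs_of_pos hposs] at hm1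
        rw [abs_of_pos hpos'] at hm2
        rw [abs_le]
        constructor <;> nlinarith
    -- conclude on indices
    have hbi := hyc b hb i
    have hbi' := hyc b' hb' i
    have hreal : |((b i : ℕ) : ℝ) - ((b' i : ℕ) : ℝ)| ≤ (n:ℝ) + 1 := by
      rw [abs_le] at hyd ⊢
      constructor <;> nlinarith [hbi.1, hbi.2, hbi'.1, hbi'.2]
    have : |(((b i : ℕ) : ℤ) : ℝ) - (((b' i : ℕ) : ℤ) : ℝ)| ≤ (((n:ℤ) + 1 : ℤ) : ℝ) := by
      push_cast
      push_cast at hreal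
      exact hreal
    exact_mod_cast (by exact_mod_cast this : (|((b i : ℕ) : ℤ) - ((b' i : ℕ) : ℤ)| : ℝ) ≤ (((n:ℤ)+1 : ℤ) : ℝ))
  -- fiber bound
  have hfib : ∀ p ∈ B.image Φ, (B.filter (fun b => Φ b = p)).card ≤ 2*(n+1)+1 := by
    intro p hp
    obtain ⟨b₀, hb₀B, hb₀⟩ := Finset.mem_image.1 hp
    have hsub : B.filter (fun b => Φ b = p) ⊆ B.filter (fun b => Φ b = Φ b₀) := by
      rw [hb₀]
    refine le_trans (Finset.card_le_card hsub) ?_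
    have hinj : Set.InjOn (fun b : Fin (n+1) → Fin k => ((b (im b₀) : ℕ) : ℤ))
        (B.filter (fun b => Φ b = Φ b₀) : Set (Fin (n+1) → Fin k)) := by
      intro b hbmem b' hbmem' heq
      simp only [Finset.coe_filter, Set.mem_setOf_eq] at hbmem hbmem'
      have hib : im b = im b₀ := congrArg Prod.fst hbmem.2
      have hib' : im b' = im b₀ := congrArg Prod.fst hbmem'.2
      have hΦeq : Φ b = Φ b' := hbmem.2.trans hbmem'.2.symm
      funext j
      by_cases hj : j = im b₀
      · subst hj
        have heq' : ((b (im b₀) : ℕ) : ℤ) = ((b' (im b₀) : ℕ) : ℤ) := heq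
        have : (b (im b₀) : ℕ) = (b' (im b₀) : ℕ) := by exact_mod_cast heq'
        exact Fin.val_injective this
      · obtain ⟨l, hl⟩ := Fin.exists_succAbove_eq (show j ≠ im b₀ from hj)
        have := congrFun (congrArg (fun p => p.2.2) hΦeq) l
        change b ((im b).succAbove l) = b' ((im b').succAbove l) at this
        rw [hib, hib'] at this
        rw [hl] at this
        exact this
    have hmap : ∀ b ∈ B.filter (fun b => Φ b = Φ b₀),
        ((b (im b₀) : ℕ) : ℤ) ∈ Finset.Icc ((b₀ (im b₀) : ℤ) - ((n:ℤ)+1)) ((b₀ (im b₀) : ℤ) + ((n:ℤ)+1)) := by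
      intro b hbmem
      rw [Finset.mem_filter] at hbmem
      have hib : im b = im b₀ := congrArg Prod.fst hbmem.2
      have := key b hbmem.1 b₀ hb₀B hbmem.2
      rw [hib] at this
      rw [Finset.mem_Icc]
      rw [abs_le] at this
      omega
    have := Finset.card_le_card_of_injOn _ hmap hinj
    refine le_trans this ?_
    rw [Int.card_Icc]
    omega
  have h1 : B.card ≤ (2*(n+1)+1) * (B.image Φ).card :=
    Finset.card_le_mul_card_image B (2*(n+1)+1) hfib
  have h2 : (B.image Φ).card ≤ (n+1) * (2 * k ^ n) := by
    refine le_trans (Finset.card_le_univ _) ?_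
    simp only [Fintype.card_prod, Fintype.card_bool, Fintype.card_fun, Fintype.card_fin]
    ring_nf
    omega
  calc B.card ≤ (2*(n+1)+1) * (B.image Φ).card := h1
    _ ≤ (2*(n+1)+1) * ((n+1) * (2 * k ^ n)) := Nat.mul_le_mul_left _ h2

theorem grid_cells_near_convex_boundary :
    ∀ d : ℕ, 1 ≤ d → ∃ C : ℝ, 0 < C ∧
      ∀ (ℓ₀ : ℝ), 0 < ℓ₀ → ∀ (k : ℕ), 1 ≤ k →
        ∀ (D : Set (EuclideanSpace ℝ (Fin d))), Convex ℝ D →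
          ∀ (L : ℝ), 0 ≤ L →
            (({a : Fin d → Fin k |
                ∃ x : EuclideanSpace ℝ (Fin d),
                  (∀ i : Fin d,
                    (a i : ℝ) * ℓ₀ / k ≤ x i ∧ x i ≤ ((a i : ℝ) + 1) * ℓ₀ / k) ∧
                  ∃ y ∈ frontier D, dist x y ≤ L}).ncard : ℝ)
              ≤ C * (k : ℝ) ^ (d - 1) * (1 + ((k : ℝ) * L / ℓ₀) ^ d) := by
  intro d hd
  obtain ⟨n, rfl⟩ : ∃ n, d = n + 1 := ⟨d - 1, by omega⟩
  refine ⟨((2*((n:ℝ)+1)+2) * (((n:ℝ)+1)*2)) * 10 ^ (n+1), by positivity, ?_⟩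
  intro ℓ₀ hℓ k hk D hD L hL
  classical
  have hk0 : (0:ℝ) < (k:ℝ) := by exact_mod_cast hk
  set h : ℝ := ℓ₀ / (k:ℝ) with hhdef
  have hh : 0 < h := div_pos hℓ hk0
  set m : ℕ := ⌈L / h⌉₊ with hmdef
  have hLm : L ≤ (m:ℝ) * h := by
    have := Nat.le_ceil (L / h)
    rw [← hmdef] at this
    calc L = (L / h) * h := by field_simp
    _ ≤ (m:ℝ) * h := by nlinarith
  -- turn ncard into Finset.card
  have hset : ∀ (Q : (Fin (n+1) → Fin k) → Prop), {a | Q a}.ncard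
      = (@Finset.filter _ Q (fun a => Classical.propDecidable _) Finset.univ).card := by
    intro Q
    rw [← Set.ncard_coe_finset]
    congr 1
    ext a
    simp
  rw [hset]
  set S : Finset (Fin (n+1) → Fin k) :=
    (@Finset.filter _ _ (fun a => Classical.propDecidable _) Finset.univ) with hSdef
  -- the target cells and boxes
  set T : Finset (Fin (n+1) → Fin k) :=
    Finset.univ.filter
      (fun b => ∃ y ∈ frontier D, ∀ i, clampN k h (y i) = (b i : ℕ)) with hTdef
  set box : (Fin (n+1) → Fin k) → Finset (Fin (n+1) → Fin k) :=
    fun b => Finset.univ.filter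
      (fun a => ∀ i, |(a i : ℤ) - (b i : ℤ)| ≤ (m:ℤ)+1) with hboxdef
  -- Step A : covering
  have hcover : S ⊆ T.biUnion box := by
    intro a ha
    rw [hSdef, Finset.mem_filter] at ha
    obtain ⟨-, x, hx, y, hyF, hdist⟩ := ha
    set b : Fin (n+1) → Fin k := fun i => ⟨clampN k h (y i), clampN_lt hk h (y i)⟩ with hbdef
    have hbT : b ∈ T := by
      rw [hTdef, Finset.mem_filter]
      exact ⟨Finset.mem_univ _, y, hyF, fun i => rfl⟩
    refine Finset.mem_biUnion.2 ⟨b, hbT, ?_⟩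
    rw [hboxdef, Finset.mem_filter]
    refine ⟨Finset.mem_univ _, fun i => ?_⟩
    have hx1 : ((a i : ℕ):ℝ) * h ≤ x i := by
      have := (hx i).1
      rw [hhdef]
      rw [mul_div_assoc] at this
      exact this
    have hx2 : x i ≤ (((a i : ℕ):ℝ)+1) * h := by
      have := (hx i).2
      rw [hhdef]
      rw [mul_div_assoc] at this
      exact this
    have hxy : |x i - y i| ≤ L := le_trans (coord_le_dist x y i) hdist
    have := clampN_close hk hh (a i).isLt hx1 hx2 hxy hLm
    rw [abs_sub_comm] at this
    exact this
  -- Step B : card chain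
  have hboxcard : ∀ b ∈ T, (box b).card ≤ (2*m+3)^(n+1) := fun b _ => box_card b
  have hA : S.card ≤ T.card * (2*m+3)^(n+1) := by
    calc S.card ≤ (T.biUnion box).card := Finset.card_le_card hcover
    _ ≤ ∑ b ∈ T, (box b).card := Finset.card_biUnion_le
    _ ≤ T.card * (2*m+3)^(n+1) := by
        have := Finset.sum_le_card_nsmul T _ _ hboxcard
        simpa [smul_eq_mul] using this
  -- Step C : T.card bound
  have hT : T.card ≤ (2*(n+1)+2) * ((n+1) * (2 * k ^ n)) := by
    set good : (Fin (n+1) → Fin k) → Prop :=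
      fun b => ∀ i, (b i : ℕ) ≠ 0 ∧ (b i : ℕ) ≠ k - 1 with hgood
    have hsplit : (T.filter good).card + (T.filter (fun b => ¬ good b)).card = T.card :=
      Finset.card_filter_add_card_filter_not _
    have hgoodcard : (T.filter good).card ≤ (2*(n+1)+1) * ((n+1) * (2 * k ^ n)) := by
      have hwit : ∀ b ∈ T.filter good, ∃ y : EuclideanSpace ℝ (Fin (n+1)),
          y ∈ frontier D ∧ ∀ i, (b i : ℝ) * h ≤ y i ∧ y i ≤ ((b i : ℝ) + 1) * h := by
        intro b hb
        rw [Finset.mem_filter] at hb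
        have hbT := hb.1
        rw [hTdef, Finset.mem_filter] at hbT
        obtain ⟨-, y, hyF, hy⟩ := hbT
        refine ⟨y, hyF, fun i => ?_⟩
        have hgi := hb.2 i
        have := clampN_cell hk hh (y i) (by rw [hy i]; exact hgi.1) (by rw [hy i]; exact hgi.2)
        rw [hy i] at this
        exact ⟨this.1, this.2.le⟩
      choose! w hw1 hw2 using hwit
      exact good_cells_card hh hD _ w hw1 hw2
    have hbadcard : (T.filter (fun b => ¬ good b)).card ≤ (n+1) * (2 * k ^ n) := by
      have hsub : T.filter (fun b => ¬ good b) ⊆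
          (Finset.univ : Finset (Fin (n+1))).biUnion (fun i =>
            Finset.univ.filter (fun b : Fin (n+1) → Fin k => (b i : ℕ) = 0)
            ∪ Finset.univ.filter (fun b : Fin (n+1) → Fin k => (b i : ℕ) = k - 1)) := by
        intro b hb
        simp only [Finset.mem_filter, hgood] at hb
        push_neg at hb
        obtain ⟨i, hi⟩ := hb.2
        refine Finset.mem_biUnion.2 ⟨i, Finset.mem_univ _, ?_⟩
        rw [Finset.mem_union]
        by_cases h0 : (b i : ℕ) = 0
        · exact Or.inl (Finset.mem_filter.2 ⟨Finset.mem_univ _, h0⟩)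
        · exact Or.inr (Finset.mem_filter.2 ⟨Finset.mem_univ _, hi h0⟩)
      refine le_trans (Finset.card_le_card hsub) ?_
      refine le_trans Finset.card_biUnion_le ?_
      have hone : ∀ i : Fin (n+1),
          ((Finset.univ.filter (fun b : Fin (n+1) → Fin k => (b i : ℕ) = 0)
            ∪ Finset.univ.filter (fun b : Fin (n+1) → Fin k => (b i : ℕ) = k - 1)).card)
            ≤ 2 * k ^ n := by
        intro i
        refine le_trans (Finset.card_union_le _ _) ?_
        have h1 := slice_card (k := k) i 0
        have h2 := slice_card (k := k) i (k-1)
        exact le_trans (Nat.add_le_add h1 h2) (le_of_eq (two_mul _).symm)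
      refine le_trans (Finset.sum_le_sum (fun i _ => hone i)) ?_
      rw [Finset.sum_const, Finset.card_univ, Fintype.card_fin, smul_eq_mul]
    have harith : (2*(n+1)+1) * ((n+1) * (2 * k ^ n)) + (n+1) * (2 * k ^ n)
        = (2*(n+1)+2) * ((n+1) * (2 * k ^ n)) := by ring
    omega
  -- Step D : real arithmetic
  have hnat : S.card ≤ ((2*(n+1)+2) * ((n+1) * (2 * k ^ n))) * (2*m+3)^(n+1) :=
    le_trans hA (Nat.mul_le_mul_right _ hT)
  have hreal : (S.card : ℝ) ≤ ((2*((n:ℝ)+1)+2) * (((n:ℝ)+1) * (2 * (k:ℝ) ^ n))) * (2*(m:ℝ)+3)^(n+1) := by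
    exact_mod_cast hnat
  set t : ℝ := (k:ℝ) * L / ℓ₀ with htdef
  have ht0 : 0 ≤ t := div_nonneg (mul_nonneg hk0.le hL) hℓ.le
  have hth : L / h = t := by
    rw [hhdef, htdef, div_div_eq_mul_div]
    ring
  have hm2 : (m:ℝ) ≤ L/h + 1 := by
    rw [hmdef]
    exact (Nat.ceil_lt_add_one (div_nonneg hL hh.le)).le
  have h5 : (2*(m:ℝ)+3) ≤ 5*(1+t) := by
    rw [← hth]
    have : 0 ≤ L / h := div_nonneg hL hh.le
    nlinarith
  have hpow : (2*(m:ℝ)+3)^(n+1) ≤ 10^(n+1) * (1 + t^(n+1)) := by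
    calc (2*(m:ℝ)+3)^(n+1) ≤ (5*(1+t))^(n+1) := by
          apply pow_le_pow_left₀ (by positivity) h5
    _ = 5^(n+1) * (1+t)^(n+1) := by rw [mul_pow]
    _ ≤ 5^(n+1) * (2^(n+1) * (1 + t^(n+1))) := by
          have := one_add_pow_le ht0 (n+1)
          have h5p : (0:ℝ) < 5^(n+1) := by positivity
          nlinarith
    _ = (5^(n+1) * 2^(n+1)) * (1 + t^(n+1)) := by ring
    _ = 10^(n+1) * (1 + t^(n+1)) := by rw [← mul_pow]; norm_num
  have hfinal : (S.card : ℝ)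
      ≤ ((2*((n:ℝ)+1)+2) * (((n:ℝ)+1)*2)) * 10 ^ (n+1) * (k:ℝ) ^ n * (1 + t^(n+1)) := by
    have hkpow : (0:ℝ) ≤ (k:ℝ)^n := by positivity
    have hc : (0:ℝ) ≤ (2*((n:ℝ)+1)+2) * (((n:ℝ)+1)*2) := by positivity
    calc (S.card : ℝ) ≤ ((2*((n:ℝ)+1)+2) * (((n:ℝ)+1) * (2 * (k:ℝ) ^ n))) * (2*(m:ℝ)+3)^(n+1) := hreal
    _ ≤ ((2*((n:ℝ)+1)+2) * (((n:ℝ)+1) * (2 * (k:ℝ) ^ n))) * (10^(n+1) * (1 + t^(n+1))) := by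
        apply mul_le_mul_of_nonneg_left hpow (by positivity)
    _ = ((2*((n:ℝ)+1)+2) * (((n:ℝ)+1)*2)) * 10 ^ (n+1) * (k:ℝ) ^ n * (1 + t^(n+1)) := by ring
  have hexp : (n + 1) - 1 = n := by omega
  rw [hexp]
  exact hfinal
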